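/- Let r ≥ 1, let A ⊂ ℤʳ be a finite set, and let g be a nonzero Laurent polynomial in r variables over ℂ. Then there exists a finite subset F ⊂ (ℂˣ)ʳ with g(u) ≠ 0 for every u ∈ F, such that for every Laurent polynomial p = ∑_{a∈A} p_a x^a over ℂ with support contained in A one has max_{a∈A} |p_a| ≤ max_{u∈F} |p(u)|. -/

import Mathlib

open scoped BigOperators

noncomputable section

/-- The ring of Laurent polynomials in variables indexed by `σ` over `K`,
realized as the monoid algebra `K[x₁^{±1},…]` on the exponent group `σ → ℤ`. -/
abbrev LaurentPoly (K : Type*) [CommSemiring K] (σ : Type*) : Type _ :=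
  AddMonoidAlgebra K (σ → ℤ)

variable {K : Type*} [Field K] {σ : Type*} [Fintype σ]

/-- `t ^ a = ∏ i, (t i) ^ (a i)` for a torus point `t ∈ (Kˣ)^σ` and `a ∈ ℤ^σ`. -/
def torusPow (t : σ → Kˣ) (a : σ → ℤ) : K :=
  ∏ i, ((t i ^ a i : Kˣ) : K)

/-- Evaluation of a Laurent polynomial `f = ∑ a α_a x^a` at a point `t` of the
torus: `f(t) = ∑ a α_a t^a`. -/
def laurentEval (f : LaurentPoly K σ) (t : σ → Kˣ) : K :=
  f.coeff.sum fun a c => c * torusPow t a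

/-- The twist `t*f = ∑ a α_a t^a x^a` of a Laurent polynomial by a torus point. -/
def laurentTwist (t : σ → Kˣ) (f : LaurentPoly K σ) : LaurentPoly K σ :=
  AddMonoidAlgebra.ofCoeff (f.coeff.sum fun a c => Finsupp.single a (c * torusPow t a))

/-- The height of a (prime) ideal: the supremum of lengths of chains of prime
ideals strictly contained in it. -/
def idealHeight {R : Type*} [CommRing R] (P : Ideal R) : ℕ∞ :=
  Set.chainHeight {Q : Ideal R | Q.IsPrime ∧ Q < P} (· < ·)

/-- A family of Laurent polynomials meets properly if, for every subset `I` of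
the index set, every minimal prime of the ideal generated by the corresponding
subfamily has height `#I`. -/
def MeetsProperly {k : ℕ} (g : Fin k → LaurentPoly K σ) : Prop :=
  ∀ I : Finset (Fin k), ∀ P ∈ (Ideal.span (g '' ↑I)).minimalPrimes,
    idealHeight P = I.card

lemma torusPow_ne_zero (t : σ → Kˣ) (a : σ → ℤ) : torusPow t a ≠ 0 := by
  simp only [torusPow]
  exact Finset.prod_ne_zero_iff.2 fun i _ => Units.ne_zero _

lemma torusPow_zero (t : σ → Kˣ) : torusPow t 0 = 1 := by
  simp [torusPow]

lemma torusPow_add (t : σ → Kˣ) (a b : σ → ℤ) :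
    torusPow t (a + b) = torusPow t a * torusPow t b := by
  simp only [torusPow, ← Finset.prod_mul_distrib]
  refine Finset.prod_congr rfl fun i _ => ?_
  rw [Pi.add_apply, zpow_add, Units.val_mul]

lemma torusPow_mul (s t : σ → Kˣ) (a : σ → ℤ) :
    torusPow (fun i => s i * t i) a = torusPow s a * torusPow t a := by
  simp only [torusPow, ← Finset.prod_mul_distrib]
  refine Finset.prod_congr rfl fun i _ => ?_
  rw [mul_zpow, Units.val_mul]

/-- `torusPow t` as a monoid hom from `Multiplicative (σ → ℤ)`. -/
def torusPowHom (t : σ → Kˣ) : Multiplicative (σ → ℤ) →* K where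
  toFun a := torusPow t (Multiplicative.toAdd a)
  map_one' := torusPow_zero t
  map_mul' a b := torusPow_add t _ _

/-- Evaluation as a ring hom. -/
def laurentEvalHom (t : σ → Kˣ) : LaurentPoly K σ →+* K :=
  AddMonoidAlgebra.liftNCRingHom (RingHom.id K) (torusPowHom t)
    (fun _ _ => Commute.all _ _)

lemma laurentEval_eq_hom (f : LaurentPoly K σ) (t : σ → Kˣ) :
    laurentEval f t = laurentEvalHom t f := by
  rw [laurentEval]
  conv_rhs => rw [← AddMonoidAlgebra.sum_coeff_single f]
  rw [map_finsuppSum]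
  refine Finsupp.sum_congr fun a _ => ?_
  rw [laurentEvalHom, AddMonoidAlgebra.liftNCRingHom_single]; rfl

lemma laurentEval_single (a : σ → ℤ) (c : K) (t : σ → Kˣ) :
    laurentEval (AddMonoidAlgebra.single a c) t = c * torusPow t a := by
  simp [laurentEval, AddMonoidAlgebra.coeff_single, Finsupp.sum_single_index]

lemma laurentTwist_apply (t : σ → Kˣ) (f : LaurentPoly K σ) (a : σ → ℤ) :
    (laurentTwist t f).coeff a = f.coeff a * torusPow t a := by
  classical
  rw [laurentTwist, AddMonoidAlgebra.coeff_ofCoeff, Finsupp.sum_apply]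
  rw [Finsupp.sum]
  simp only [Finsupp.single_apply]
  rw [Finset.sum_ite_eq' f.coeff.support a (fun b => f.coeff b * torusPow t b)]
  by_cases h : a ∈ f.coeff.support
  · simp [h]
  · simp only [h, if_false]
    rw [Finsupp.notMem_support_iff.1 h, zero_mul]

lemma laurentTwist_ne_zero (t : σ → Kˣ) {f : LaurentPoly K σ} (hf : f ≠ 0) :
    laurentTwist t f ≠ 0 := by
  obtain ⟨a, ha⟩ := Finsupp.ne_iff.1 (mt AddMonoidAlgebra.coeff_eq_zero.1 hf)
  simp only [Finsupp.coe_zero, Pi.zero_apply] at ha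
  intro h
  have := laurentTwist_apply t f a
  rw [h] at this
  simp only [AddMonoidAlgebra.coeff_zero, Finsupp.coe_zero, Pi.zero_apply] at this
  exact ha ((mul_eq_zero.1 this.symm).resolve_right (torusPow_ne_zero t a))

lemma laurentEval_laurentTwist (t s : σ → Kˣ) (f : LaurentPoly K σ) :
    laurentEval (laurentTwist t f) s = laurentEval f (fun i => t i * s i) := by
  rw [laurentEval_eq_hom, laurentTwist, AddMonoidAlgebra.ofCoeff_finsuppSum, map_finsuppSum]
  rw [laurentEval, Finsupp.sum, Finsupp.sum]
  refine Finset.sum_congr rfl fun a _ => ?_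
  rw [← laurentEval_eq_hom, AddMonoidAlgebra.ofCoeff_single, laurentEval_single, torusPow_mul, mul_assoc]

lemma laurentEval_eq_sum_subset {A : Finset (σ → ℤ)} {p : LaurentPoly K σ}
    (hp : p.coeff.support ⊆ A) (t : σ → Kˣ) :
    laurentEval p t = ∑ b ∈ A, p.coeff b * torusPow t b := by
  rw [laurentEval, Finsupp.sum_of_support_subset p.coeff hp _ (fun b _ => by rw [zero_mul])]

lemma digits_zero (M : ℤ) (hM : 1 < M) :
    ∀ (n : ℕ) (v : ℕ → ℤ), (∀ i, |v i| < M) →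
      (∑ i ∈ Finset.range n, v i * M ^ i) = 0 → ∀ i < n, v i = 0 := by
  intro n
  induction n with
  | zero => intro v _ _ i hi; omega
  | succ n ih =>
    intro v hv hsum i hi
    rw [Finset.sum_range_succ'] at hsum
    simp only [pow_zero, mul_one] at hsum
    have hdvd : M ∣ v 0 := by
      have : v 0 = -∑ i ∈ Finset.range n, v (i + 1) * M ^ (i + 1) := by linarith
      rw [this]
      refine dvd_neg.2 (Finset.dvd_sum fun j _ => ?_)
      exact Dvd.dvd.mul_left (dvd_pow_self M (Nat.succ_ne_zero j)) _
    have hv0 : v 0 = 0 := Int.eq_zero_of_abs_lt_dvd hdvd (hv 0)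
    have hrest : (∑ i ∈ Finset.range n, v (i + 1) * M ^ i) = 0 := by
      have h1 : M * (∑ i ∈ Finset.range n, v (i + 1) * M ^ i) = 0 := by
        rw [Finset.mul_sum]
        have : ∀ j ∈ Finset.range n, M * (v (j + 1) * M ^ j) = v (j + 1) * M ^ (j + 1) := by
          intro j _; ring
        rw [Finset.sum_congr rfl this]
        linarith
      exact (mul_eq_zero.1 h1).resolve_left (by omega)
    rcases Nat.eq_zero_or_pos i with h0 | hpos
    · rw [h0]; exact hv0
    · obtain ⟨j, rfl⟩ := Nat.exists_eq_add_of_lt hpos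
      simp only [zero_add]
      exact ih (fun i => v (i + 1)) (fun i => hv (i + 1)) hrest j (by omega)

lemma exists_injective_functional {r : ℕ} (S : Finset (Fin r → ℤ)) :
    ∃ m : Fin r → ℤ, ∀ a ∈ S, ∀ b ∈ S,
      (∑ i, a i * m i) = (∑ i, b i * m i) → a = b := by
  classical
  set B : ℤ := 1 + ∑ a ∈ S, ∑ i, |a i| with hB
  have hbound : ∀ a ∈ S, ∀ i, |a i| < B := by
    intro a ha i
    have h1 : |a i| ≤ ∑ j, |a j| :=
      Finset.single_le_sum (f := fun j => |a j|) (fun j _ => abs_nonneg _) (Finset.mem_univ i)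
    have h2 : (∑ j, |a j|) ≤ ∑ c ∈ S, ∑ j, |c j| :=
      Finset.single_le_sum (f := fun c => ∑ j, |c j|) (fun b _ => Finset.sum_nonneg fun j _ => abs_nonneg _) ha
    have : (0:ℤ) ≤ ∑ c ∈ S, ∑ j, |c j| := le_trans (le_trans (abs_nonneg _) h1) h2
    rw [hB]; linarith
  have hB1 : 1 ≤ B := by
    have : (0:ℤ) ≤ ∑ a ∈ S, ∑ i, |a i| :=
      Finset.sum_nonneg fun b _ => Finset.sum_nonneg fun j _ => abs_nonneg _
    rw [hB]; linarith
  set M : ℤ := 2 * B with hM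
  refine ⟨fun i => M ^ (i : ℕ), ?_⟩
  intro a ha b hb heq
  set v : ℕ → ℤ := fun i => if h : i < r then a ⟨i, h⟩ - b ⟨i, h⟩ else 0 with hv
  have hvlt : ∀ i, |v i| < M := by
    intro i
    simp only [hv]
    split
    · next h =>
      have h1 := hbound a ha ⟨i, h⟩
      have h2 := hbound b hb ⟨i, h⟩
      rw [abs_sub_lt_iff]
      constructor <;> [linarith [neg_abs_le (b ⟨i, ‹i < r›⟩), le_abs_self (a ⟨i, ‹i < r›⟩)];
        linarith [neg_abs_le (a ⟨i, ‹i < r›⟩), le_abs_self (b ⟨i, ‹i < r›⟩)]]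
    · simp only [abs_zero]; linarith
  have hsum : (∑ i ∈ Finset.range r, v i * M ^ i) = 0 := by
    rw [← Fin.sum_univ_eq_sum_range (fun i => v i * M ^ i) r]
    have : ∀ i : Fin r, v i * M ^ (i : ℕ) = a i * M ^ (i:ℕ) - b i * M ^ (i:ℕ) := by
      intro i
      simp only [hv, dif_pos i.isLt, Fin.eta]
      ring
    rw [Finset.sum_congr rfl fun i _ => this i, Finset.sum_sub_distrib, heq, sub_self]
  have := digits_zero M (by rw [hM]; linarith) r v hvlt hsum
  funext i
  have h := this i i.isLt
  simp only [hv, dif_pos i.isLt, Fin.eta] at h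
  linarith

open Complex

lemma zpow_finset_sum {G : Type*} [CommGroup G] {ι : Type*} (z : G) (s : Finset ι) (f : ι → ℤ) :
    z ^ (∑ i ∈ s, f i) = ∏ i ∈ s, z ^ f i := by
  classical
  induction s using Finset.cons_induction with
  | empty => simp
  | cons a s ha ih => rw [Finset.sum_cons, Finset.prod_cons, zpow_add, ih]

lemma circle_infinite : Set.Infinite {z : ℂ | ‖z‖ = 1} := by
  have hinj : Set.InjOn (fun t : ℝ => Complex.exp (t * Complex.I)) (Set.Ioo 0 1) := by
    intro s hs t ht h
    simp only at h
    obtain ⟨n, hn⟩ := Complex.exp_eq_exp_iff_exists_int.1 h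
    have him := congrArg Complex.im hn
    simp only [Complex.add_im, Complex.mul_im, Complex.ofReal_re, Complex.I_im,
      Complex.ofReal_im, Complex.I_re, Complex.intCast_re, Complex.intCast_im,
      Complex.mul_re, Complex.re_ofNat, Complex.im_ofNat] at him
    -- him : s = t + n * 2π  (roughly)
    have hpi := Real.pi_gt_three
    have hs1 := hs.1; have hs2 := hs.2; have ht1 := ht.1; have ht2 := ht.2
    have hn0 : n = 0 := by
      rcases lt_trichotomy (n:ℝ) 0 with h' | h' | h'
      · exfalso
        have : (n:ℝ) ≤ -1 := by exact_mod_cast Int.le_of_lt_add_one (by exact_mod_cast h' : n < 0) |>.trans_eq rfl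
        nlinarith
      · exact_mod_cast h'
      · exfalso
        have : (1:ℝ) ≤ n := by exact_mod_cast h'
        nlinarith
    rw [hn0] at him
    push_cast at him
    linarith
  have himg : (fun t : ℝ => Complex.exp (t * Complex.I)) '' (Set.Ioo 0 1) ⊆
      {z : ℂ | ‖z‖ = 1} := by
    rintro _ ⟨t, _, rfl⟩
    simp [Complex.norm_exp]
  exact ((Set.Ioo_infinite (by norm_num)).image hinj).mono himg

lemma exists_circle_not_root {P : Polynomial ℂ} (hP : P ≠ 0) :
    ∃ z : ℂ, ‖z‖ = 1 ∧ P.eval z ≠ 0 := by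
  by_contra hcon
  push_neg at hcon
  have hsub : {z : ℂ | ‖z‖ = 1} ⊆ {z : ℂ | P.IsRoot z} := fun z hz => hcon z hz
  exact (circle_infinite.mono hsub) (Polynomial.finite_setOf_isRoot hP)

lemma Units.val_prod' {M : Type*} [CommMonoid M] {ι : Type*} (s : Finset ι) (f : ι → Mˣ) :
    ((∏ i ∈ s, f i : Mˣ) : M) = ∏ i ∈ s, ((f i : M)) :=
  map_prod (Units.coeHom M) f s

lemma exists_unit_torus_nonvanishing {r : ℕ} {h : LaurentPoly ℂ (Fin r)} (hh : h ≠ 0) :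
    ∃ c : Fin r → ℂˣ, (∀ i, ‖(c i : ℂ)‖ = 1) ∧ laurentEval h c ≠ 0 := by
  classical
  set S := h.coeff.support with hS
  obtain ⟨m, hm⟩ := exists_injective_functional S
  set d : (Fin r → ℤ) → ℤ := fun a => ∑ i, a i * m i with hd
  set D : ℤ := ∑ a ∈ S, |d a| with hD
  have hDa : ∀ a ∈ S, 0 ≤ d a + D := by
    intro a ha
    have h1 : |d a| ≤ D :=
      Finset.single_le_sum (f := fun a => |d a|) (fun b _ => abs_nonneg _) ha
    have := neg_abs_le (d a)
    linarith
  set e : (Fin r → ℤ) → ℕ := fun a => (d a + D).toNat with he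
  have hecast : ∀ a ∈ S, ((e a : ℤ)) = d a + D := fun a ha => Int.toNat_of_nonneg (hDa a ha)
  have heinj : ∀ a ∈ S, ∀ b ∈ S, e a = e b → a = b := by
    intro a ha b hb hab
    apply hm a ha b hb
    have h2 : d a + D = d b + D := by rw [← hecast a ha, ← hecast b hb, hab]
    have hdd : d a = d b := by linarith
    simpa [hd] using hdd
  set P : Polynomial ℂ := ∑ a ∈ S, Polynomial.C (h.coeff a) * Polynomial.X ^ (e a) with hP
  obtain ⟨a₀, ha₀⟩ : S.Nonempty := Finsupp.support_nonempty_iff.2 (mt AddMonoidAlgebra.coeff_eq_zero.1 hh)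
  have hPne : P ≠ 0 := by
    intro h0
    have hc : P.coeff (e a₀) = h.coeff a₀ := by
      rw [hP, Polynomial.finset_sum_coeff]
      simp only [Polynomial.coeff_C_mul, Polynomial.coeff_X_pow]
      rw [Finset.sum_eq_single a₀]
      · simp
      · intro b hb hne
        rw [if_neg (fun hEq => hne (heinj b hb a₀ ha₀ hEq.symm)), mul_zero]
      · intro habs; exact absurd ha₀ habs
    rw [h0, Polynomial.coeff_zero] at hc
    exact (Finsupp.mem_support_iff.1 ha₀) hc.symm
  obtain ⟨z, hz1, hzP⟩ := exists_circle_not_root hPne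
  have hz0 : z ≠ 0 := by
    intro h0; rw [h0] at hz1; simp at hz1
  set zu : ℂˣ := Units.mk0 z hz0 with hzu
  set c : Fin r → ℂˣ := fun i => zu ^ (m i) with hc
  have hT : ∀ a : Fin r → ℤ, torusPow c a = z ^ (d a) := by
    intro a
    have h1 : ∀ i : Fin r, ((zu ^ (m i)) ^ (a i) : ℂˣ) = zu ^ (a i * m i) := by
      intro i; rw [← zpow_mul, mul_comm (m i) (a i)]
    calc torusPow c a = ∏ i, (((zu ^ (a i * m i) : ℂˣ)) : ℂ) := by
          rw [torusPow]
          exact Finset.prod_congr rfl fun i _ => congrArg Units.val (h1 i)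
      _ = ((∏ i, (zu ^ (a i * m i) : ℂˣ) : ℂˣ) : ℂ) := (Units.val_prod' _ _).symm
      _ = ((zu ^ (∑ i, a i * m i) : ℂˣ) : ℂ) := by rw [zpow_finset_sum]
      _ = z ^ (d a) := by rw [Units.val_zpow_eq_zpow_val, hd]; rfl
  refine ⟨c, fun i => ?_, ?_⟩
  · rw [hc]
    simp only [Units.val_zpow_eq_zpow_val, norm_zpow]
    rw [hzu]
    simp [hz1]
  · intro hzero
    apply hzP
    have heval : laurentEval h c = ∑ a ∈ S, h.coeff a * z ^ (d a) := by
      rw [laurentEval_eq_sum_subset (le_refl S) c]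
      exact Finset.sum_congr rfl fun a _ => by rw [hT a]
    have hPeval : P.eval z = (∑ a ∈ S, h.coeff a * z ^ (d a)) * z ^ D := by
      rw [hP, Polynomial.eval_finset_sum, Finset.sum_mul]
      refine Finset.sum_congr rfl fun a ha => ?_
      rw [Polynomial.eval_mul, Polynomial.eval_C, Polynomial.eval_pow, Polynomial.eval_X]
      rw [← zpow_natCast z (e a), hecast a ha, zpow_add₀ hz0, mul_assoc]
    rw [hPeval, ← heval, hzero, zero_mul]

lemma geom_sum_zero_of_not_dvd {N : ℕ} {ζ : ℂ} (hζ : IsPrimitiveRoot ζ N)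
    {d : ℤ} (hd : ¬ ((N:ℤ) ∣ d)) : ∑ j ∈ Finset.range N, (ζ ^ d) ^ j = 0 := by
  have hx1 : ζ ^ d ≠ 1 := fun h1 => hd ((hζ.zpow_eq_one_iff_dvd d).1 h1)
  have hxN : (ζ ^ d) ^ N = 1 := by
    rw [← zpow_natCast (ζ ^ d) N, ← zpow_mul, mul_comm, zpow_mul, zpow_natCast,
      hζ.pow_eq_one, one_zpow]
  rw [geom_sum_eq hx1, hxN, sub_self, zero_div]

lemma abs_torusPow_eq_one {r : ℕ} {t : Fin r → ℂˣ} (ht : ∀ i, ‖(t i : ℂ)‖ = 1)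
    (a : Fin r → ℤ) : ‖torusPow t a‖ = 1 := by
  rw [torusPow, norm_prod]
  refine Finset.prod_eq_one fun i _ => ?_
  rw [Units.val_zpow_eq_zpow_val, norm_zpow, ht i, one_zpow]

/-- For a finite set `A ⊂ ℤʳ` and a nonzero Laurent polynomial
`g` over `ℂ`, there is a finite set `F` of torus points avoiding the zeros of
`g` such that for every Laurent polynomial `p` supported on `A`, the maximum of
the absolute values of the coefficients of `p` is at most the maximum of the
absolute values of `p` on `F`. -/
theorem coefficients_bounded_by_values_on_finite_set
    (r : ℕ) (hr : 1 ≤ r) (A : Finset (Fin r → ℤ))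
    (g : LaurentPoly ℂ (Fin r)) (hg : g ≠ 0) :
    ∃ (F : Finset (Fin r → ℂˣ)) (hF : F.Nonempty),
      (∀ u ∈ F, laurentEval g u ≠ 0) ∧
      ∀ p : LaurentPoly ℂ (Fin r), p.coeff.support ⊆ A →
        ∀ a ∈ A, ‖p.coeff a‖ ≤
          F.sup' hF fun u => ‖laurentEval p u‖ := by
  classical
  -- separation modulus
  obtain ⟨N, hNpos, hsep⟩ :
      ∃ N : ℕ, 0 < N ∧ ∀ a ∈ A, ∀ b ∈ A, ∀ i : Fin r, b i ≠ a i → ¬ ((N:ℤ) ∣ (b i - a i)) := by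
    refine ⟨2 * (∑ a ∈ A, ∑ i, (a i).natAbs) + 1, Nat.succ_pos _, ?_⟩
    intro a ha b hb i hne hdvd
    set KK : ℕ := ∑ a ∈ A, ∑ i, (a i).natAbs with hKK
    have hcoord : ∀ x ∈ A, (x i).natAbs ≤ KK := by
      intro x hx
      calc (x i).natAbs ≤ ∑ j, (x j).natAbs :=
            Finset.single_le_sum (f := fun j => (x j).natAbs)
              (fun _ _ => Nat.zero_le _) (Finset.mem_univ i)
        _ ≤ KK := Finset.single_le_sum (f := fun c => ∑ j, (c j).natAbs)
              (fun _ _ => Nat.zero_le _) hx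
    have h1 := hcoord a ha
    have h2 := hcoord b hb
    have habs : |b i - a i| < ((2 * KK + 1 : ℕ) : ℤ) := by
      have e1 : |a i| ≤ (KK:ℤ) := by
        rw [Int.abs_eq_natAbs]; exact_mod_cast h1
      have e2 : |b i| ≤ (KK:ℤ) := by
        rw [Int.abs_eq_natAbs]; exact_mod_cast h2
      have := abs_sub (b i) (a i)
      push_cast
      linarith
    have h3 := Int.eq_zero_of_abs_lt_dvd hdvd habs
    exact hne (by linarith)
  -- primitive root setup
  have hN0 : (N:ℕ) ≠ 0 := hNpos.ne'
  set ζ : ℂ := Complex.exp (2 * Real.pi * Complex.I / N) with hζdef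
  have hζ : IsPrimitiveRoot ζ N := Complex.isPrimitiveRoot_exp N hN0
  have hζu : IsUnit ζ := hζ.isUnit hN0
  set ζu : ℂˣ := hζu.unit with hζudef
  have hζuval : (ζu : ℂ) = ζ := hζu.unit_spec
  have hζabs : ‖ζ‖ = 1 := by
    have h1 : (‖ζ‖) ^ N = 1 := by
      rw [← norm_pow, hζ.pow_eq_one, norm_one]
    have h2 := norm_nonneg ζ
    rcases lt_trichotomy (‖ζ‖) 1 with h | h | h
    · exact absurd h1 (by nlinarith [pow_lt_one₀ h2 h hN0])
    · exact h
    · exact absurd h1 (by nlinarith [one_lt_pow₀ h hN0])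
  have habsζu : ‖(ζu : ℂ)‖ = 1 := by rw [hζuval]; exact hζabs
  -- the grid of roots of unity and twisted product
  have hne : Nonempty (Fin r → Fin N) := ⟨fun _ => ⟨0, hNpos⟩⟩
  set ω : (Fin r → Fin N) → (Fin r → ℂˣ) := fun k i => ζu ^ ((k i : ℕ)) with hω
  set H : LaurentPoly ℂ (Fin r) := ∏ k : Fin r → Fin N, laurentTwist (ω k) g with hH
  have hHne : H ≠ 0 :=
    Finset.prod_ne_zero_iff.2 fun k _ => laurentTwist_ne_zero _ hg
  obtain ⟨c, hcabs, hceval⟩ := exists_unit_torus_nonvanishing hHne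
  set u : (Fin r → Fin N) → (Fin r → ℂˣ) := fun k i => ω k i * c i with hu
  have hHc : laurentEval H c = ∏ k : Fin r → Fin N, laurentEval g (u k) := by
    rw [laurentEval_eq_hom, hH, map_prod]
    exact Finset.prod_congr rfl fun k _ => by
      rw [← laurentEval_eq_hom, laurentEval_laurentTwist]
  have heach : ∀ k : Fin r → Fin N, laurentEval g (u k) ≠ 0 := by
    intro k
    have := hceval
    rw [hHc] at this
    exact Finset.prod_ne_zero_iff.1 this k (Finset.mem_univ k)
  set F : Finset (Fin r → ℂˣ) := Finset.image u Finset.univ with hFdef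
  have hF : F.Nonempty :=
    ⟨u Classical.ofNonempty, Finset.mem_image_of_mem _ (Finset.mem_univ _)⟩
  refine ⟨F, hF, ?_, ?_⟩
  · intro v hv
    obtain ⟨k, _, rfl⟩ := Finset.mem_image.1 hv
    exact heach k
  intro p hp a ha
  -- absolute value facts
  have habsω : ∀ (k : Fin r → Fin N) (b : Fin r → ℤ),
      ‖torusPow (ω k) b‖ = 1 := by
    intro k b
    refine abs_torusPow_eq_one (fun i => ?_) b
    rw [hω]
    simp only [Units.val_pow_eq_pow_val, norm_pow, habsζu, one_pow]
  -- rewrite each evaluation as a sum over A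
  have hstep1 : ∀ k : Fin r → Fin N, laurentEval p (u k) * torusPow (ω k) (-a)
      = ∑ b ∈ A, p.coeff b * torusPow c b * torusPow (ω k) (b - a) := by
    intro k
    rw [laurentEval_eq_sum_subset hp, Finset.sum_mul]
    refine Finset.sum_congr rfl fun b _ => ?_
    have h1 : torusPow (u k) b = torusPow (ω k) b * torusPow c b := by
      rw [hu]; exact torusPow_mul (ω k) c b
    rw [h1, sub_eq_add_neg, torusPow_add]
    ring
  have hswap : (∑ k : Fin r → Fin N, laurentEval p (u k) * torusPow (ω k) (-a))
      = ∑ b ∈ A, p.coeff b * torusPow c b * (∑ k : Fin r → Fin N, torusPow (ω k) (b - a)) := by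
    rw [Finset.sum_congr rfl fun k _ => hstep1 k, Finset.sum_comm]
    exact Finset.sum_congr rfl fun b _ => by rw [Finset.mul_sum]
  -- the inner character sum
  have hinner : ∀ b ∈ A, (∑ k : Fin r → Fin N, torusPow (ω k) (b - a))
      = if b = a then ((N:ℂ))^r else 0 := by
    intro b hb
    by_cases hba : b = a
    · subst hba
      rw [if_pos rfl, sub_self]
      simp only [torusPow_zero]
      rw [Finset.sum_const, Finset.card_univ]
      simp [Fintype.card_fun, nsmul_eq_mul]
    · rw [if_neg hba]
      obtain ⟨i₀, hi₀⟩ : ∃ i, b i ≠ a i := by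
        by_contra hcon
        push_neg at hcon
        exact hba (funext hcon)
      have hform : ∀ k : Fin r → Fin N, torusPow (ω k) (b - a)
          = ∏ i, (ζ ^ ((b - a) i)) ^ ((k i : ℕ)) := by
        intro k
        rw [torusPow]
        refine Finset.prod_congr rfl fun i _ => ?_
        have h2 : ((ω k i) ^ ((b - a) i) : ℂˣ) = (ζu ^ ((b - a) i)) ^ ((k i : ℕ)) := by
          simp only [hω]
          rw [← zpow_natCast ζu (k i : ℕ), ← zpow_mul, mul_comm, zpow_mul, zpow_natCast]
        rw [h2, Units.val_pow_eq_pow_val, Units.val_zpow_eq_zpow_val, hζuval]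
      rw [Finset.sum_congr rfl fun k _ => hform k]
      have hps := Finset.prod_univ_sum (fun _ : Fin r => (Finset.univ : Finset (Fin N)))
        (fun i j => (ζ ^ ((b - a) i)) ^ ((j : ℕ)))
      rw [Fintype.piFinset_univ] at hps
      rw [← hps]
      refine Finset.prod_eq_zero (Finset.mem_univ i₀) ?_
      rw [Fin.sum_univ_eq_sum_range (fun j => (ζ ^ ((b - a) i₀)) ^ j) N]
      have hv : (b - a) i₀ = b i₀ - a i₀ := rfl
      rw [hv]
      exact geom_sum_zero_of_not_dvd hζ (hsep a ha b hb i₀ hi₀)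
  have key : (∑ k : Fin r → Fin N, laurentEval p (u k) * torusPow (ω k) (-a))
      = (N:ℂ)^r * (p.coeff a * torusPow c a) := by
    rw [hswap, Finset.sum_congr rfl (fun b hb => by rw [hinner b hb])]
    rw [Finset.sum_eq_single a]
    · rw [if_pos rfl]; ring
    · intro b _ hne'; rw [if_neg hne', mul_zero]
    · intro habs'; exact absurd ha habs'
  -- conclude via absolute values
  have hTc : ‖torusPow c a‖ = 1 := abs_torusPow_eq_one hcabs a
  have hL : ((N:ℝ))^r * ‖p.coeff a‖
      = ‖∑ k : Fin r → Fin N, laurentEval p (u k) * torusPow (ω k) (-a)‖ := by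
    rw [key, norm_mul, norm_mul, hTc, mul_one, norm_pow, Complex.norm_natCast]
  have hR : ‖∑ k : Fin r → Fin N, laurentEval p (u k) * torusPow (ω k) (-a)‖
      ≤ ((N:ℝ))^r * F.sup' hF (fun v => ‖laurentEval p v‖) := by
    calc ‖∑ k : Fin r → Fin N, laurentEval p (u k) * torusPow (ω k) (-a)‖
        ≤ ∑ k : Fin r → Fin N, ‖laurentEval p (u k) * torusPow (ω k) (-a)‖ :=
          norm_sum_le _ _
      _ ≤ ∑ _k : Fin r → Fin N, F.sup' hF (fun v => ‖laurentEval p v‖) := by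
          refine Finset.sum_le_sum fun k _ => ?_
          rw [norm_mul, habsω, mul_one]
          exact Finset.le_sup' (fun v => ‖laurentEval p v‖)
            (Finset.mem_image_of_mem u (Finset.mem_univ k))
      _ = ((N:ℝ))^r * F.sup' hF (fun v => ‖laurentEval p v‖) := by
          rw [Finset.sum_const, Finset.card_univ]
          simp [Fintype.card_fun, nsmul_eq_mul]
  have hNRpos : (0:ℝ) < ((N:ℝ))^r := pow_pos (Nat.cast_pos.2 hNpos) r
  have hfin : ((N:ℝ))^r * ‖p.coeff a‖
      ≤ ((N:ℝ))^r * F.sup' hF (fun v => ‖laurentEval p v‖) := by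
    rw [hL]; exact hR
  exact le_of_mul_le_mul_left hfin hNRpos
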